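/- Let 0 ≤ j ≤ t−1 and 1 ≤ ℓ ≤ p−1, and let f = ∏_{i=1}^m x_i^{a_i} y_i^{b_i} be a basis monomial (0 ≤ a_i, b_i ≤ q−1), with a_{1j} the j-th p-adic digit of a₁. Then, as an equality of functions V → k: Σ_{μ ∈ kˣ} μ^{ℓp^j}·(f ∘ τ_{μ⁻¹}) = 0 if a_{1j} < ℓ, and Σ_{μ ∈ kˣ} μ^{ℓp^j}·(f ∘ τ_{μ⁻¹}) = −C(a_{1j}, ℓ)·x₁^{a₁−ℓp^j} y₁^{b₁+ℓp^j} ∏_{i=2}^m x_i^{a_i} y_i^{b_i} if a_{1j} ≥ ℓ, where the binomial coefficient C(a_{1j}, ℓ) is reduced into F_p ⊆ k. -/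

import Mathlib

open scoped Classical

noncomputable section

/-- The `2m`-dimensional standard symplectic space over `F_q = GaloisField p t`:
pairs `(x, y)` of `m`-tuples; `x_i(v) = v.1 i`, `y_i(v) = v.2 i` (indices from `0`). -/
abbrev SympV (p t m : ℕ) [Fact p.Prime] : Type :=
  (Fin m → GaloisField p t) × (Fin m → GaloisField p t)

noncomputable instance (p t : ℕ) [Fact p.Prime] : Fintype (GaloisField p t) :=
  Fintype.ofFinite _

/-- The basis monomial `∏_i x_i^{a_i} y_i^{b_i}` as a function `V → k`. -/
def bmono {p t m : ℕ} [Fact p.Prime] (a b : Fin m → ℕ) :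
    SympV p t m → GaloisField p t :=
  fun v => ∏ i, (v.1 i ^ a i * v.2 i ^ b i)

/-- The symplectic transvection `τ_ν(v) = v + ν·y₁(v)·e₁`; the substitution
`f ↦ f ∘ τ_ν` replaces `x₁` by `x₁ + ν y₁`. -/
def transv {p t m : ℕ} [Fact p.Prime] [NeZero m] (ν : GaloisField p t)
    (v : SympV p t m) : SympV p t m :=
  (Function.update v.1 0 (v.1 0 + ν * v.2 0), v.2)

/-- One-step Lucas congruence, as an equality in `ZMod p`. -/
lemma lucas_step_aux (p : ℕ) [Fact p.Prime] (n k : ℕ) :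
    ((n.choose k : ZMod p)) =
      ((n % p).choose (k % p) : ZMod p) * ((n / p).choose (k / p) : ZMod p) := by
  have h := Choose.choose_modEq_choose_mod_mul_choose_div (p := p) (n := n) (k := k)
  have h2 := (ZMod.intCast_eq_intCast_iff _ _ _).mpr h
  push_cast at h2
  exact_mod_cast h2

/-- Lucas: `C(n, ℓ p^j) ≡ C(digit_j(n), ℓ) mod p` for `ℓ < p`. -/
lemma lucas_digit_aux (p : ℕ) [Fact p.Prime] {ℓ : ℕ} (hℓ : ℓ < p) :
    ∀ (j n : ℕ), ((n.choose (ℓ * p ^ j) : ZMod p)) = ((n / p ^ j % p).choose ℓ : ZMod p)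
  | 0, n => by
      have h := lucas_step_aux p n ℓ
      rw [Nat.mod_eq_of_lt hℓ, Nat.div_eq_of_lt hℓ] at h
      simpa using h
  | j+1, n => by
      have hp : 0 < p := (Fact.out : p.Prime).pos
      have h := lucas_step_aux p n (ℓ * p ^ (j+1))
      have h1 : ℓ * p ^ (j+1) % p = 0 := by
        simp [pow_succ, ← mul_assoc, Nat.mul_mod_left]
      have h2 : ℓ * p ^ (j+1) / p = ℓ * p ^ j := by
        rw [pow_succ, ← mul_assoc, Nat.mul_div_cancel _ hp]
      rw [h1, h2, Nat.choose_zero_right, Nat.cast_one, one_mul] at h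
      rw [h, lucas_digit_aux p hℓ j (n / p), Nat.div_div_eq_div_mul, ← pow_succ']

/-- The character-sum orthogonality: `∑_{μ ∈ Kˣ} μ^{n₀} (μ⁻¹)^d` is `-1` iff `d = n₀`
(within the relevant ranges), else `0`. -/
lemma coeff_sum_aux (K : Type*) [Field K] [Fintype K] (n₀ d : ℕ)
    (h1 : 1 ≤ n₀) (h2 : n₀ < Fintype.card K - 1) (hd : d ≤ Fintype.card K - 1) :
    ∑ μ : Kˣ, (μ : K) ^ n₀ * ((μ : K)⁻¹) ^ d = if d = n₀ then (-1 : K) else 0 := by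
  classical
  set q := Fintype.card K with hq
  have hq2 : 2 ≤ q := Fintype.one_lt_card
  have hterm : ∀ μ : Kˣ, (μ : K) ^ n₀ * ((μ : K)⁻¹) ^ d = (μ : K) ^ (n₀ + (q - 2) * d) := by
    intro μ
    have hinv : (μ : K)⁻¹ = (μ : K) ^ (q - 2) := by
      refine inv_eq_of_mul_eq_one_right ?_
      rw [← pow_succ']
      have : q - 2 + 1 = q - 1 := by omega
      rw [this]
      exact FiniteField.pow_card_sub_one_eq_one _ μ.ne_zero
    rw [hinv, ← pow_mul, ← pow_add]
  simp_rw [hterm]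
  have := FiniteField.sum_pow_units K (n₀ + (q - 2) * d)
  rw [this]
  congr 1
  rw [eq_iff_iff]
  constructor
  · intro hdvd
    obtain ⟨c, hc⟩ := hdvd
    have hdvd' : ((q : ℤ) - 1) ∣ (n₀ : ℤ) - d := by
      refine ⟨(c : ℤ) - d, ?_⟩
      have hc' : (n₀ : ℤ) + ((q : ℤ) - 2) * d = ((q : ℤ) - 1) * c := by
        have := congrArg (Nat.cast (R := ℤ)) hc
        rw [← hq] at this
        push_cast [Nat.cast_sub (by omega : 2 ≤ q), Nat.cast_sub (by omega : 1 ≤ q)] at this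
        linarith [this]
      ring_nf
      ring_nf at hc'
      linarith [hc']
    obtain ⟨e, he⟩ := hdvd'
    have hcast : (n₀ : ℤ) < (q : ℤ) - 1 := by
      have : (n₀ : ℕ) < q - 1 := h2
      omega
    have hdcast : (d : ℤ) ≤ (q : ℤ) - 1 := by
      have : (d : ℕ) ≤ q - 1 := hd
      omega
    have hQ : (0 : ℤ) < (q : ℤ) - 1 := by omega
    have he1 : ((q : ℤ) - 1) * e < ((q : ℤ) - 1) * 1 := by rw [mul_one]; omega
    have he2 : ((q : ℤ) - 1) * (-1) < ((q : ℤ) - 1) * e := by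
      have hn1 : (1 : ℤ) ≤ (n₀ : ℤ) := by exact_mod_cast h1
      nlinarith
    have he3 : e < 1 := lt_of_mul_lt_mul_left he1 (le_of_lt hQ)
    have he4 : (-1 : ℤ) < e := lt_of_mul_lt_mul_left he2 (le_of_lt hQ)
    have he0 : e = 0 := by omega
    rw [he0, mul_zero, sub_eq_zero] at he
    exact_mod_cast he.symm
  · rintro rfl
    refine ⟨d, ?_⟩
    have : q - 1 = (q - 2) + 1 := by omega
    rw [this, add_mul, one_mul, add_comm]

/-- Splitting a basis monomial as (factor at index 0) times the rest. -/
lemma bmono_split {p t m : ℕ} [Fact p.Prime] (a b : Fin m → ℕ) (v : SympV p t m) [NeZero m] :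
    bmono a b v = v.1 0 ^ a 0 * v.2 0 ^ b 0 *
      ∏ i ∈ ({0}ᶜ : Finset (Fin m)), (v.1 i ^ a i * v.2 i ^ b i) := by
  unfold bmono
  rw [Fintype.prod_eq_mul_prod_compl 0]

/-- Lemma (shift operators): for `0 ≤ j ≤ t−1`, `1 ≤ ℓ ≤ p−1` and a basis monomial
`f = ∏ x_i^{a_i} y_i^{b_i}`, the sum `Σ_{μ ∈ kˣ} μ^{ℓp^j}·(f ∘ τ_{μ⁻¹})` is `0` if the
`j`-th `p`-adic digit `a_{1j}` of `a₁` is `< ℓ`, and equals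
`−C(a_{1j},ℓ)·x₁^{a₁−ℓp^j} y₁^{b₁+ℓp^j} ∏_{i≥2} x_i^{a_i} y_i^{b_i}` otherwise. -/
theorem shift_operator (p t m : ℕ) [Fact p.Prime] [NeZero m]
    (hodd : Odd p) (ht : 1 < t) (hm : 2 ≤ m)
    (j ℓ : ℕ) (hj : j ≤ t - 1) (hl1 : 1 ≤ ℓ) (hl2 : ℓ ≤ p - 1)
    (a b : Fin m → ℕ) (ha : ∀ i, a i ≤ p ^ t - 1) (hb : ∀ i, b i ≤ p ^ t - 1) :
    (∑ μ : (GaloisField p t)ˣ,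
        ((μ : GaloisField p t) ^ (ℓ * p ^ j)) •
          (fun v => bmono a b (transv (((μ⁻¹ : (GaloisField p t)ˣ) : GaloisField p t)) v))) =
      if a 0 / p ^ j % p < ℓ then (0 : SympV p t m → GaloisField p t)
      else (-(((a 0 / p ^ j % p).choose ℓ : GaloisField p t))) •
        bmono (Function.update a 0 (a 0 - ℓ * p ^ j))
              (Function.update b 0 (b 0 + ℓ * p ^ j)) := by
  classical
  have hp : p.Prime := Fact.out
  have hp3 : 3 ≤ p := by
    obtain ⟨r, hr⟩ := hodd
    have := hp.two_le
    omega
  set K := GaloisField p t with hK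
  set n₀ := ℓ * p ^ j with hn₀def
  have hcard : Fintype.card K = p ^ t := by
    rw [← Nat.card_eq_fintype_card]
    exact GaloisField.card (p := p) (n := t) (by omega)
  have hq2 : 2 ≤ p ^ t := by
    calc 2 ≤ p := by omega
    _ = p ^ 1 := (pow_one p).symm
    _ ≤ p ^ t := Nat.pow_le_pow_right (by omega) (by omega)
  have hn₀1 : 1 ≤ n₀ := Nat.mul_pos hl1 (pow_pos (by omega : 0 < p) j)
  have hn₀lt : n₀ < p ^ t - 1 := by
    have hpj : p ^ j ≤ p ^ (t - 1) := Nat.pow_le_pow_right (by omega) hj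
    have h1 : n₀ ≤ (p - 1) * p ^ (t - 1) := Nat.mul_le_mul hl2 hpj
    have hpt : p ^ t = p * p ^ (t - 1) := by
      conv_lhs => rw [show t = (t - 1) + 1 by omega]
      rw [pow_succ']
    have h2 : (p - 1) * p ^ (t - 1) = p * p ^ (t - 1) - p ^ (t - 1) := by
      rw [Nat.sub_mul, one_mul]
    have hp1 : 3 ≤ p ^ (t - 1) := by
      calc 3 ≤ p := hp3
      _ = p ^ 1 := (pow_one p).symm
      _ ≤ p ^ (t - 1) := Nat.pow_le_pow_right (by omega) (by omega)
    omega
  have hcast : (((a 0).choose n₀ : K)) = ((a 0 / p ^ j % p).choose ℓ : K) := by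
    have h := lucas_digit_aux p (show ℓ < p by omega) j (a 0)
    have h2 := congrArg (ZMod.castHom (dvd_refl p) K) h
    simpa using h2
  -- the master computation
  have key : (∑ μ : Kˣ,
        ((μ : K) ^ n₀) • (fun v => bmono a b (transv ((μ⁻¹ : Kˣ) : K) v))) =
      if n₀ ≤ a 0 then
        (-(((a 0).choose n₀ : K))) •
          bmono (Function.update a 0 (a 0 - n₀)) (Function.update b 0 (b 0 + n₀))
      else (0 : SympV p t m → K) := by
    funext v
    simp only [Finset.sum_apply, Pi.smul_apply, smul_eq_mul]
    set X := v.1 0 with hX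
    set Y := v.2 0 with hY
    set R := ∏ i ∈ ({0}ᶜ : Finset (Fin m)), (v.1 i ^ a i * v.2 i ^ b i) with hR
    have hbm : ∀ ν : K, bmono a b (transv ν v) = (X + ν * Y) ^ a 0 * Y ^ b 0 * R := by
      intro ν
      rw [bmono_split]
      show (Function.update v.1 0 (v.1 0 + ν * v.2 0)) 0 ^ a 0 * v.2 0 ^ b 0 *
          ∏ i ∈ ({0}ᶜ : Finset (Fin m)),
            ((Function.update v.1 0 (v.1 0 + ν * v.2 0)) i ^ a i * v.2 i ^ b i) = _
      rw [Function.update_self]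
      congr 1
      refine Finset.prod_congr rfl fun i hi => ?_
      rw [Function.update_of_ne (by simpa using hi)]
    have step1 : ∀ μ : Kˣ, (μ : K) ^ n₀ * bmono a b (transv ((μ⁻¹ : Kˣ) : K) v) =
        ∑ s ∈ Finset.range (a 0 + 1),
          ((μ : K) ^ n₀ * ((μ : K)⁻¹) ^ (a 0 - s)) *
            (X ^ s * Y ^ (a 0 - s + b 0) * ((a 0).choose s : K) * R) := by
      intro μ
      rw [hbm, add_pow, Finset.sum_mul, Finset.sum_mul, Finset.mul_sum]
      refine Finset.sum_congr rfl fun s _ => ?_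
      rw [Units.val_inv_eq_inv_val, mul_pow, pow_add]
      ring
    calc ∑ μ : Kˣ, (μ : K) ^ n₀ * bmono a b (transv ((μ⁻¹ : Kˣ) : K) v)
        = ∑ μ : Kˣ, ∑ s ∈ Finset.range (a 0 + 1),
            ((μ : K) ^ n₀ * ((μ : K)⁻¹) ^ (a 0 - s)) *
              (X ^ s * Y ^ (a 0 - s + b 0) * ((a 0).choose s : K) * R) :=
          Finset.sum_congr rfl fun μ _ => step1 μ
      _ = ∑ s ∈ Finset.range (a 0 + 1),
            (∑ μ : Kˣ, (μ : K) ^ n₀ * ((μ : K)⁻¹) ^ (a 0 - s)) *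
              (X ^ s * Y ^ (a 0 - s + b 0) * ((a 0).choose s : K) * R) := by
          rw [Finset.sum_comm]
          exact Finset.sum_congr rfl fun s _ => (Finset.sum_mul _ _ _).symm
      _ = ∑ s ∈ Finset.range (a 0 + 1),
            (if a 0 - s = n₀ then (-1 : K) else 0) *
              (X ^ s * Y ^ (a 0 - s + b 0) * ((a 0).choose s : K) * R) := by
          refine Finset.sum_congr rfl fun s _ => ?_
          rw [coeff_sum_aux K n₀ (a 0 - s) hn₀1 (by rw [hcard]; omega)
            (by rw [hcard]; have := ha 0; omega)]
      _ = (if n₀ ≤ a 0 then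
            (-(((a 0).choose n₀ : K))) •
              bmono (Function.update a 0 (a 0 - n₀)) (Function.update b 0 (b 0 + n₀))
          else (0 : SympV p t m → K)) v := by
          by_cases hle : n₀ ≤ a 0
          · rw [if_pos hle]
            rw [Finset.sum_eq_single (a 0 - n₀)]
            · rw [if_pos (by omega)]
              simp only [Pi.smul_apply, smul_eq_mul]
              rw [bmono_split]
              have hA0 : (Function.update a 0 (a 0 - n₀)) 0 = a 0 - n₀ :=
                Function.update_self _ _ _
              have hB0 : (Function.update b 0 (b 0 + n₀)) 0 = b 0 + n₀ :=
                Function.update_self _ _ _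
              have hprod : ∏ i ∈ ({0}ᶜ : Finset (Fin m)),
                  (v.1 i ^ (Function.update a 0 (a 0 - n₀)) i *
                    v.2 i ^ (Function.update b 0 (b 0 + n₀)) i) = R := by
                refine Finset.prod_congr rfl fun i hi => ?_
                rw [Function.update_of_ne (by simpa using hi),
                  Function.update_of_ne (by simpa using hi)]
              rw [hA0, hB0, hprod, show a 0 - (a 0 - n₀) = n₀ by omega,
                Nat.choose_symm hle]
              ring
            · intro s hs hne
              rw [if_neg (by simp only [Finset.mem_range] at hs; omega), zero_mul]
            · intro h
              exact absurd (Finset.mem_range.mpr (by omega)) h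
          · rw [if_neg hle]
            refine Finset.sum_eq_zero fun s hs => ?_
            rw [if_neg (by simp only [Finset.mem_range] at hs; omega), zero_mul]
  rw [key]
  by_cases hdig : a 0 / p ^ j % p < ℓ
  · rw [if_pos hdig]
    by_cases hle : n₀ ≤ a 0
    · rw [if_pos hle]
      have hz : (((a 0).choose n₀ : K)) = 0 := by
        rw [hcast, Nat.choose_eq_zero_of_lt hdig, Nat.cast_zero]
      rw [hz, neg_zero, zero_smul]
    · rw [if_neg hle]
  · rw [if_neg hdig]
    push_neg at hdig
    have hle : n₀ ≤ a 0 :=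
      calc n₀ = ℓ * p ^ j := hn₀def
      _ ≤ (a 0 / p ^ j % p) * p ^ j := Nat.mul_le_mul_right _ hdig
      _ ≤ (a 0 / p ^ j) * p ^ j := Nat.mul_le_mul_right _ (Nat.mod_le _ _)
      _ ≤ a 0 := Nat.div_mul_le_self _ _
    rw [if_pos hle, hcast]

end
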